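/- Let U be an n-dimensional real vector space with a complete flag (Fⱼ), W a subspace with jump set e, and Uₑ := span{Xⱼ : j ∈ e} where Xⱼ ∈ Fⱼ \ Fⱼ₋₁. Then for every i ∉ e (i ∈ {1,…,n}), one has W + F_{i-1} = W ⊕ (Uₑ ∩ F_{i-1}) as an (internal) direct sum. -/

import Mathlib

open Module in
/-- With a complete flag `(Fⱼ)`, a subspace `W` with jump set `e`,
`Xⱼ ∈ Fⱼ \ Fⱼ₋₁`, and `Uₑ = span{Xⱼ : j ∈ e}`: for every `i ∈ {1,…,n}` with
`i ∉ e`, one has `W + F_{i-1} = W ⊕ (Uₑ ∩ F_{i-1})` (internal direct sum). -/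
theorem stmt_9 {U : Type*} [AddCommGroup U] [Module ℝ U] [FiniteDimensional ℝ U]
    (n : ℕ) (hn : finrank ℝ U = n)
    (F : ℕ → Submodule ℝ U)
    (hdim : ∀ j ≤ n, finrank ℝ (F j) = j)
    (hmono : ∀ j < n, F j ≤ F (j + 1))
    (htop : F n = ⊤)
    (W : Submodule ℝ U)
    (X : ℕ → U)
    (hX : ∀ j, 1 ≤ j → j ≤ n → X j ∈ F j ∧ X j ∉ F (j - 1))
    (e : Set ℕ) (he : e = {j | 1 ≤ j ∧ j ≤ n ∧ ¬ F j ≤ W ⊔ F (j - 1)})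
    (Ue : Submodule ℝ U) (hUe : Ue = Submodule.span ℝ (X '' e)) :
    ∀ i, 1 ≤ i → i ≤ n → i ∉ e →
      W ⊔ F (i - 1) = W ⊔ (Ue ⊓ F (i - 1)) ∧ W ⊓ (Ue ⊓ F (i - 1)) = ⊥ := by
  intro i hi1 hin _
  obtain ⟨k, rfl⟩ : ∃ k, i = k + 1 := ⟨i - 1, (Nat.succ_pred_eq_of_pos hi1).symm⟩
  simp only [Nat.add_sub_cancel]
  have hkn : k ≤ n := le_trans (Nat.le_succ k) hin
  have hF0 : F 0 = ⊥ := Submodule.finrank_eq_zero.mp (hdim 0 (Nat.zero_le n))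
  have hFmono : ∀ a b, a ≤ b → b ≤ n → F a ≤ F b := by
    intro a b hab hbn
    induction b with
    | zero =>
      have : a = 0 := Nat.le_zero.mp hab
      subst this; exact le_rfl
    | succ b ih =>
      rcases Nat.lt_or_ge a (b + 1) with h | h
      · exact le_trans (ih (Nat.lt_succ_iff.mp h) (le_trans (Nat.le_succ b) hbn))
          (hmono b (lt_of_lt_of_le (Nat.lt_succ_self b) hbn))
      · have : a = b + 1 := le_antisymm hab h
        subst this; exact le_rfl
  have hee : ∀ j ∈ e, 1 ≤ j ∧ j ≤ n ∧ ¬ F j ≤ W ⊔ F (j - 1) := by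
    intro j hj; rw [he] at hj; exact hj
  have hnot : ∀ j, 1 ≤ j → j ≤ n → j ∉ e → F j ≤ W ⊔ F (j - 1) := by
    intro j h1 h2 hj
    by_contra h
    exact hj (he ▸ ⟨h1, h2, h⟩)
  set S : ℕ → Submodule ℝ U := fun m => Submodule.span ℝ (X '' (e ∩ Set.Iic m)) with hS
  have hS0 : S 0 = ⊥ := by
    have : e ∩ Set.Iic 0 = ∅ := by
      ext x
      simp only [Set.mem_inter_iff, Set.mem_Iic, Set.mem_empty_iff_false, iff_false, not_and]
      intro hx hx0
      have := (hee x hx).1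
      omega
    simp [hS, this]
  have hSF : ∀ m, m ≤ n → S m ≤ F m := by
    intro m hm
    rw [hS]
    apply Submodule.span_le.mpr
    rintro x ⟨j, ⟨hje, hjm⟩, rfl⟩
    exact hFmono j m hjm hm ((hX j (hee j hje).1 (hee j hje).2.1).1)
  have hSUe : ∀ m, S m ≤ Ue := by
    intro m
    rw [hS, hUe]
    exact Submodule.span_mono (Set.image_mono Set.inter_subset_left)
  have hSsucc_mem : ∀ m, m + 1 ∈ e → S (m + 1) = S m ⊔ Submodule.span ℝ {X (m + 1)} := by
    intro m hm
    have hset : e ∩ Set.Iic (m + 1) = (e ∩ Set.Iic m) ∪ {m + 1} := by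
      ext x
      simp only [Set.mem_inter_iff, Set.mem_Iic, Set.union_singleton, Set.mem_insert_iff]
      constructor
      · rintro ⟨hx, hx1⟩
        rcases Nat.lt_or_ge x (m + 1) with h | h
        · exact Or.inr ⟨hx, Nat.lt_succ_iff.mp h⟩
        · exact Or.inl (le_antisymm hx1 h)
      · rintro (rfl | ⟨hx, hx1⟩)
        · exact ⟨hm, le_rfl⟩
        · exact ⟨hx, le_trans hx1 (Nat.le_succ m)⟩
    rw [hS]
    simp only [hset, Set.image_union, Set.image_singleton, Submodule.span_union]
  have hSsucc_not : ∀ m, m + 1 ∉ e → S (m + 1) = S m := by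
    intro m hm
    have hset : e ∩ Set.Iic (m + 1) = e ∩ Set.Iic m := by
      ext x
      simp only [Set.mem_inter_iff, Set.mem_Iic]
      constructor
      · rintro ⟨hx, hx1⟩
        refine ⟨hx, ?_⟩
        rcases Nat.lt_or_ge x (m + 1) with h | h
        · exact Nat.lt_succ_iff.mp h
        · exact absurd (le_antisymm hx1 h ▸ hx) hm
      · rintro ⟨hx, hx1⟩
        exact ⟨hx, le_trans hx1 (Nat.le_succ m)⟩
    rw [hS]; simp only [hset]
  have hFsucc : ∀ m, m + 1 ≤ n → F (m + 1) = F m ⊔ Submodule.span ℝ {X (m + 1)} := by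
    intro m hm
    have hXm := hX (m + 1) (Nat.le_add_left 1 m) hm
    simp only [Nat.add_sub_cancel] at hXm
    have hle : F m ⊔ Submodule.span ℝ {X (m + 1)} ≤ F (m + 1) :=
      sup_le (hmono m (Nat.lt_of_succ_le hm))
        ((Submodule.span_singleton_le_iff_mem _ _).mpr hXm.1)
    have hlt : F m < F m ⊔ Submodule.span ℝ {X (m + 1)} := by
      refine lt_of_le_of_ne le_sup_left ?_
      intro hcontra
      exact hXm.2 (hcontra ▸ Submodule.mem_sup_right (Submodule.mem_span_singleton_self (X (m + 1))))
    have h1 : finrank ℝ (F m) < finrank ℝ (F m ⊔ Submodule.span ℝ {X (m + 1)} : Submodule ℝ U) :=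
      Submodule.finrank_lt_finrank_of_lt hlt
    refine (Submodule.eq_of_le_of_finrank_le hle ?_).symm
    rw [hdim (m + 1) hm]
    have := hdim m (le_trans (Nat.le_succ m) hm)
    omega
  -- Claim A
  have hA : ∀ m, m ≤ n → W ⊔ F m = W ⊔ S m := by
    intro m
    induction m with
    | zero => intro _; rw [hF0, hS0]
    | succ m ih =>
      intro hm
      have hm' : m ≤ n := le_trans (Nat.le_succ m) hm
      by_cases h : m + 1 ∈ e
      · rw [hFsucc m hm, hSsucc_mem m h, ← sup_assoc, ← sup_assoc, ih hm']
      · rw [hSsucc_not m h]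
        apply le_antisymm
        · refine sup_le le_sup_left ?_
          have := hnot (m + 1) (Nat.le_add_left 1 m) hm h
          simp only [Nat.add_sub_cancel] at this
          calc F (m + 1) ≤ W ⊔ F m := this
            _ = W ⊔ S m := ih hm'
        · exact sup_le le_sup_left
            (le_trans (le_trans (hSF m hm') (hmono m (Nat.lt_of_succ_le hm))) le_sup_right)
  -- Claim B
  have hB : ∀ d k', k' + d ≤ n → S (k' + d) ⊓ F k' ≤ S k' := by
    intro d
    induction d with
    | zero => intro k' _; exact inf_le_left
    | succ d ih =>
      intro k' hkd
      set m := k' + d with hmdef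
      have hmn : m + 1 ≤ n := hkd
      by_cases hm : m + 1 ∈ e
      · intro v hv
        obtain ⟨hv1, hv2⟩ := Submodule.mem_inf.mp hv
        rw [show k' + (d + 1) = m + 1 from rfl, hSsucc_mem m hm] at hv1
        obtain ⟨u, hu, z, hz, rfl⟩ := Submodule.mem_sup.mp hv1
        obtain ⟨c, rfl⟩ := Submodule.mem_span_singleton.mp hz
        have huFm : u ∈ F m := hSF m (le_trans (Nat.le_succ m) hmn) hu
        have hvFm : u + c • X (m + 1) ∈ F m :=
          hFmono k' m (Nat.le_add_right k' d) (le_trans (Nat.le_succ m) hmn) hv2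
        have hcX : c • X (m + 1) ∈ F m := by
          have := (F m).sub_mem hvFm huFm
          simpa using this
        have hXm := hX (m + 1) (Nat.le_add_left 1 m) hmn
        simp only [Nat.add_sub_cancel] at hXm
        have hc : c = 0 := by
          by_contra hc
          have := (F m).smul_mem c⁻¹ hcX
          rw [smul_smul, inv_mul_cancel₀ hc, one_smul] at this
          exact hXm.2 this
        rw [hc, zero_smul, add_zero] at hv2 ⊢
        exact ih k' (le_trans (Nat.le_succ (k' + d)) hkd) (Submodule.mem_inf.mpr ⟨hu, hv2⟩)
      · rw [show k' + (d + 1) = m + 1 from rfl, hSsucc_not m hm]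
        exact ih k' (le_trans (Nat.le_succ (k' + d)) hkd)
  -- Claim C
  have hC : ∀ m, m ≤ n → W ⊓ S m = ⊥ := by
    intro m
    induction m with
    | zero => intro _; rw [hS0]; exact inf_bot_eq W
    | succ m ih =>
      intro hm
      have hm' : m ≤ n := le_trans (Nat.le_succ m) hm
      by_cases h : m + 1 ∈ e
      · rw [eq_bot_iff]
        intro v hv
        obtain ⟨hvW, hvS⟩ := Submodule.mem_inf.mp hv
        rw [hSsucc_mem m h] at hvS
        obtain ⟨u, hu, z, hz, hvuz⟩ := Submodule.mem_sup.mp hvS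
        obtain ⟨c, rfl⟩ := Submodule.mem_span_singleton.mp hz
        have huFm : u ∈ F m := hSF m hm' hu
        have hc : c = 0 := by
          by_contra hc
          have hXW : X (m + 1) ∈ W ⊔ F m := by
            have h1 : v - u ∈ W ⊔ F m :=
              (W ⊔ F m).sub_mem (Submodule.mem_sup_left hvW) (Submodule.mem_sup_right huFm)
            have h2 : c⁻¹ • (v - u) ∈ W ⊔ F m := (W ⊔ F m).smul_mem c⁻¹ h1
            have : c⁻¹ • (v - u) = X (m + 1) := by
              rw [← hvuz]
              rw [show u + c • X (m + 1) - u = c • X (m + 1) by abel]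
              rw [smul_smul, inv_mul_cancel₀ hc, one_smul]
            rwa [this] at h2
          have hle : F (m + 1) ≤ W ⊔ F m := by
            rw [hFsucc m hm]
            exact sup_le le_sup_right ((Submodule.span_singleton_le_iff_mem _ _).mpr hXW)
          have := (hee (m + 1) h).2.2
          simp only [Nat.add_sub_cancel] at this
          exact this hle
        rw [hc, zero_smul, add_zero] at hvuz
        rw [hvuz] at hu
        have : v ∈ W ⊓ S m := Submodule.mem_inf.mpr ⟨hvW, hu⟩
        rw [ih hm'] at this
        exact this
      · rw [hSsucc_not m h]
        exact ih hm'
  -- combine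
  have hUeS : Ue = S n := by
    rw [hUe, hS]
    congr 1
    rw [Set.inter_eq_self_of_subset_left]
    intro j hj
    exact (hee j hj).2.1
  have hinter : Ue ⊓ F k = S k := by
    apply le_antisymm
    · have := hB (n - k) k (by omega)
      rw [show k + (n - k) = n from by omega] at this
      rw [hUeS]
      exact this
    · exact le_inf (hSUe k) (hSF k hkn)
  exact ⟨by rw [hinter]; exact hA k hkn, by rw [hinter]; exact hC k hkn⟩
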